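/- Let ℤ^d be the d-dimensional integer lattice graph (vertices ℤ^d, edges between points at ℓ¹-distance 1). Then Ric(ℤ^d) = 0: Γ₂(f)(x) ≥ 0 for every f:ℤ^d→ℝ and x∈ℤ^d, and for every K > 0 there exist f and x with Γ₂(f)(x) < K·Γ(f)(x). -/

import Mathlib

noncomputable section
open Matrix

/-- The graph Laplacian: `Δ f (x) = Σ_{y ~ x} (f y - f x)`. -/
def lap {V : Type*} (G : SimpleGraph V) (f : V → ℝ) (x : V) : ℝ :=
  ∑ᶠ y ∈ {y | G.Adj x y}, (f y - f x)

/-- The carré du champ `Γ(f,g)(x) = (1/2) Σ_{y ~ x} (f x - f y)(g x - g y)`. -/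
def gam {V : Type*} (G : SimpleGraph V) (f g : V → ℝ) (x : V) : ℝ :=
  (1/2) * ∑ᶠ y ∈ {y | G.Adj x y}, (f x - f y) * (g x - g y)

/-- The iterated carré du champ `Γ₂(f) = (1/2) Δ Γ(f) - Γ(f, Δ f)`. -/
def gam2 {V : Type*} (G : SimpleGraph V) (f : V → ℝ) (x : V) : ℝ :=
  (1/2) * lap G (gam G f f) x - gam G f (lap G f) x

/-- `Ric(G) ≥ K` : the Bochner inequality `Γ₂(f)(x) ≥ K Γ(f)(x)` holds for all `f, x`. -/
def RicGE {V : Type*} (G : SimpleGraph V) (K : ℝ) : Prop :=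
  ∀ (f : V → ℝ) (x : V), K * gam G f f x ≤ gam2 G f x

/-- The lattice `ℤ^d`: vertices `Fin d → ℤ`, adjacent iff at ℓ¹-distance 1. -/
def latticeGraph (d : ℕ) : SimpleGraph (Fin d → ℤ) where
  Adj x y := ∑ i, |x i - y i| = 1
  symm := by
    constructor
    intro x y h
    simpa [abs_sub_comm] using h
  loopless := by constructor; intro x h; simp at h

def latS (d : ℕ) : Finset (Fin d → ℤ) :=
  Finset.univ.image (fun p : Fin d × Bool => Pi.single p.1 (if p.2 then (1:ℤ) else -1))

lemma mem_latS {d : ℕ} (v : Fin d → ℤ) : v ∈ latS d ↔ ∑ i, |v i| = 1 := by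
  constructor
  · intro hv
    simp only [latS, Finset.mem_image, Finset.mem_univ, true_and] at hv
    obtain ⟨⟨i, b⟩, rfl⟩ := hv
    have : ∀ j, |(Pi.single i (if b then (1:ℤ) else -1) : Fin d → ℤ) j| = if j = i then (1:ℤ) else 0 := by
      intro j
      rcases eq_or_ne j i with rfl | h
      · simp [Pi.single_apply]; cases b <;> simp
      · simp [Pi.single_apply, h]
    simp [this]
  · intro hv
    have hne : ∃ i, |v i| ≠ 0 := by
      by_contra h
      push_neg at h
      simp [h] at hv
    obtain ⟨i, hi⟩ := hne
    have h1 : (1:ℤ) ≤ |v i| := by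
      have := abs_nonneg (v i); omega
    have hsplit : |v i| + ∑ j ∈ Finset.univ.erase i, |v j| = 1 :=
      (Finset.add_sum_erase _ _ (Finset.mem_univ i)).trans hv
    have hrest : ∑ j ∈ Finset.univ.erase i, |v j| = 0 := by
      have hnn : (0:ℤ) ≤ ∑ j ∈ Finset.univ.erase i, |v j| :=
        Finset.sum_nonneg fun j _ => abs_nonneg _
      omega
    have hzero : ∀ j ∈ Finset.univ.erase i, |v j| = 0 :=
      (Finset.sum_eq_zero_iff_of_nonneg fun j _ => abs_nonneg _).1 hrest
    have hvi : |v i| = 1 := by omega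
    have hvj : ∀ j, j ≠ i → v j = 0 := fun j hj => by
      have := hzero j (Finset.mem_erase.2 ⟨hj, Finset.mem_univ j⟩)
      simpa using this
    simp only [latS, Finset.mem_image, Finset.mem_univ, true_and]
    refine ⟨⟨i, v i = 1⟩, funext fun j => ?_⟩
    rcases eq_or_ne j i with rfl | h
    · rcases abs_eq (by norm_num : (0:ℤ) ≤ 1) |>.1 hvi with h1 | h1 <;> simp [Pi.single_apply, h1]
    · simp [Pi.single_apply, h, hvj j h]

lemma adj_setOf (d : ℕ) (x : Fin d → ℤ) :
    {y | (latticeGraph d).Adj x y} = ↑((latS d).image (fun s => x + s)) := by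
  ext y
  simp only [Set.mem_setOf_eq, Finset.coe_image, Set.mem_image, Finset.mem_coe]
  constructor
  · intro h
    refine ⟨y - x, (mem_latS _).2 ?_, by ring⟩
    have h' : ∑ i, |x i - y i| = 1 := h
    simpa [abs_sub_comm] using h'
  · rintro ⟨s, hs, rfl⟩
    have := (mem_latS _).1 hs
    show ∑ i, |x i - (x + s) i| = 1
    simpa [abs_sub_comm] using this

lemma lap_eq (d : ℕ) (f : (Fin d → ℤ) → ℝ) (x : Fin d → ℤ) :
    lap (latticeGraph d) f x = ∑ s ∈ latS d, (f (x + s) - f x) := by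
  rw [lap, adj_setOf, finsum_mem_coe_finset,
    Finset.sum_image (fun a _ b _ h => by simpa using h)]

lemma gam_eq (d : ℕ) (f g : (Fin d → ℤ) → ℝ) (x : Fin d → ℤ) :
    gam (latticeGraph d) f g x
      = (1/2) * ∑ s ∈ latS d, (f (x + s) - f x) * (g (x + s) - g x) := by
  rw [gam, adj_setOf, finsum_mem_coe_finset,
    Finset.sum_image (fun a _ b _ h => by simpa using h)]
  congr 1
  exact Finset.sum_congr rfl fun s _ => by ring

lemma key (d : ℕ) (f : (Fin d → ℤ) → ℝ) (x : Fin d → ℤ) :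
    gam2 (latticeGraph d) f x
      = (1/4) * ∑ s ∈ latS d, ∑ t ∈ latS d,
          (f (x + s + t) - f (x + s) - f (x + t) + f x)^2 := by
  calc gam2 (latticeGraph d) f x
      = (1/2) * ∑ t ∈ latS d, ∑ s ∈ latS d,
          ((1/2) * ((f (x+t+s) - f (x+t)) * (f (x+t+s) - f (x+t))
            - (f (x+s) - f x) * (f (x+s) - f x)))
        - (1/2) * ∑ s ∈ latS d, ∑ t ∈ latS d,
          ((f (x+s) - f x) * ((f (x+s+t) - f (x+s)) - (f (x+t) - f x))) := by
        rw [gam2, lap_eq, gam_eq]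
        simp only [gam_eq, lap_eq]
        congr 1
        · congr 1
          exact Finset.sum_congr rfl fun t _ => by
            rw [← mul_sub, ← Finset.sum_sub_distrib, Finset.mul_sum]
        · congr 1
          exact Finset.sum_congr rfl fun s _ => by
            rw [← Finset.sum_sub_distrib, Finset.mul_sum]
    _ = ∑ s ∈ latS d, ∑ t ∈ latS d,
          ((1/2) * ((1/2) * ((f (x+t+s) - f (x+t)) * (f (x+t+s) - f (x+t))
            - (f (x+s) - f x) * (f (x+s) - f x)))
          - (1/2) * ((f (x+s) - f x) * ((f (x+s+t) - f (x+s)) - (f (x+t) - f x)))) := by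
        rw [Finset.sum_comm, Finset.mul_sum, Finset.mul_sum, ← Finset.sum_sub_distrib]
        exact Finset.sum_congr rfl fun s _ => by
          rw [Finset.mul_sum, Finset.mul_sum, ← Finset.sum_sub_distrib]
    _ = (1/4) * ∑ s ∈ latS d, ∑ t ∈ latS d,
          (f (x + s + t) - f (x + s) - f (x + t) + f x)^2 := by
        rw [Finset.mul_sum]
        refine Finset.sum_congr rfl fun s _ => ?_
        rw [Finset.mul_sum]
        refine Finset.sum_congr rfl fun t _ => ?_
        rw [add_right_comm x t s]
        ring

/-- `Ric(ℤ^d) = 0`: `Γ₂(f)(x) ≥ 0` always, and for every `K > 0` the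
Bochner inequality with constant `K` fails for some `f, x`. -/
theorem ric_lattice (d : ℕ) (hd : 1 ≤ d) :
    (∀ (f : (Fin d → ℤ) → ℝ) (x : Fin d → ℤ), 0 ≤ gam2 (latticeGraph d) f x) ∧
      (∀ K : ℝ, 0 < K → ∃ (f : (Fin d → ℤ) → ℝ) (x : Fin d → ℤ),
        gam2 (latticeGraph d) f x < K * gam (latticeGraph d) f f x) := by
  constructor
  · intro f x
    rw [key]
    positivity
  · intro K hK
    set i0 : Fin d := ⟨0, hd⟩
    refine ⟨fun y => (y i0 : ℝ), 0, ?_⟩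
    have h2 : gam2 (latticeGraph d) (fun y => (y i0 : ℝ)) 0 = 0 := by
      rw [key]
      have : ∀ s ∈ latS d, ∀ t ∈ latS d,
          (((0 + s + t : Fin d → ℤ) i0 : ℝ) - ((0 + s : Fin d → ℤ) i0 : ℝ)
            - ((0 + t : Fin d → ℤ) i0 : ℝ) + ((0 : Fin d → ℤ) i0 : ℝ))^2 = 0 := by
        intro s _ t _
        simp only [Pi.add_apply, Pi.zero_apply]
        push_cast
        ring
      rw [Finset.sum_congr rfl fun s hs => Finset.sum_congr rfl fun t ht => this s hs t ht]
      simp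
    have hmem : (Pi.single i0 1 : Fin d → ℤ) ∈ latS d :=
      Finset.mem_image.2 ⟨(i0, true), Finset.mem_univ _, by simp⟩
    have hg : 0 < gam (latticeGraph d) (fun y => (y i0 : ℝ)) (fun y => (y i0 : ℝ)) 0 := by
      rw [gam_eq]
      have hpos : 0 < ∑ s ∈ latS d,
          (((0 + s : Fin d → ℤ) i0 : ℝ) - ((0 : Fin d → ℤ) i0 : ℝ))
            * (((0 + s : Fin d → ℤ) i0 : ℝ) - ((0 : Fin d → ℤ) i0 : ℝ)) := by
        refine Finset.sum_pos' (fun s _ => mul_self_nonneg _) ⟨Pi.single i0 1, hmem, ?_⟩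
        simp
      linarith
    rw [h2]
    positivity
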